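/- Let m be a positive integer, let α₁, α₂ be positive irrational real numbers with 1/α₁ + 1/α₂ = m, and let β₁, β₂ be any real numbers. Then the family {S(α₁,β₁), S(α₂,β₂)} is an m-EEC if and only if β₁/α₁ + β₂/α₂ is an integer. -/

import Mathlib

/-- The number of positive integers `n` with `⌊n·α + β⌋ = N`, i.e. the multiplicity
of `N` in the Beatty sequence `S(α,β)`. -/
noncomputable def beattyCount (α β : ℝ) (N : ℤ) : ℕ :=
  Nat.card {n : ℕ // 0 < n ∧ ⌊(n : ℝ) * α + β⌋ = N}

private lemma my_ceil_eq_floor_add_one {x : ℝ} (hx : Int.fract x ≠ 0) : ⌈x⌉ = ⌊x⌋ + 1 := by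
  refine le_antisymm (Int.ceil_le_floor_add_one x) ?_
  have h1 : (⌊x⌋ : ℝ) < x := by
    rcases lt_or_eq_of_le (Int.floor_le x) with h | h
    · exact h
    · exact absurd (by rw [← Int.self_sub_floor, h, sub_self]) hx
  have := Int.lt_ceil.mpr h1
  omega

private lemma my_ceil_add_ceil (x : ℝ) (K : ℤ) (hx : Int.fract x ≠ 0) :
    ⌈x⌉ + ⌈(K : ℝ) - x⌉ = K + 1 := by
  have h : (K : ℝ) - x = -x + K := by ring
  rw [h, Int.ceil_add_intCast, Int.ceil_neg, my_ceil_eq_floor_add_one hx]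
  ring

private lemma my_fract_ne_zero {x : ℝ} (hx : ∀ k : ℤ, x ≠ k) : Int.fract x ≠ 0 := by
  intro h
  exact hx ⌊x⌋ (by have := Int.self_sub_floor x; rw [h] at this; linarith)

private lemma beattyCount_eq (α β : ℝ) (hα : 0 < α) (N : ℤ)
    (hN : 1 ≤ ⌈((N : ℝ) - β) / α⌉) :
    (beattyCount α β N : ℤ) = ⌈((N : ℝ) + 1 - β) / α⌉ - ⌈((N : ℝ) - β) / α⌉ := by
  set x := ((N : ℝ) - β) / α with hxdef
  set y := ((N : ℝ) + 1 - β) / α with hydef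
  have hxy : ⌈x⌉ ≤ ⌈y⌉ := Int.ceil_le_ceil (by
    rw [hxdef, hydef, div_le_div_iff₀ hα hα]
    nlinarith)
  have key : ∀ n : ℕ, (0 < n ∧ ⌊(n : ℝ) * α + β⌋ = N) ↔ (⌈x⌉.toNat ≤ n ∧ n < ⌈y⌉.toNat) := by
    intro n
    have hfl : ⌊(n : ℝ) * α + β⌋ = N ↔ ((N : ℝ) ≤ n * α + β ∧ (n : ℝ) * α + β < N + 1) := by
      rw [Int.floor_eq_iff]
    have h1 : ((N : ℝ) ≤ n * α + β) ↔ (x ≤ (n : ℝ)) := by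
      rw [hxdef, div_le_iff₀ hα]; constructor <;> intro h <;> nlinarith
    have h2 : ((n : ℝ) * α + β < N + 1) ↔ ((n : ℝ) < y) := by
      rw [hydef, lt_div_iff₀ hα]; constructor <;> intro h <;> nlinarith
    have h1' : (x ≤ (n : ℝ)) ↔ ⌈x⌉.toNat ≤ n := by
      rw [Int.toNat_le, Int.ceil_le]; push_cast <;> tauto
    have h2' : ((n : ℝ) < y) ↔ n < ⌈y⌉.toNat := by
      rw [Int.lt_toNat, Int.lt_ceil]; push_cast <;> tauto
    constructor
    · rintro ⟨-, h⟩
      rw [hfl, h1, h2, h1', h2'] at h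
      exact h
    · rintro ⟨ha, hb⟩
      refine ⟨?_, by rw [hfl, h1, h2, h1', h2']; exact ⟨ha, hb⟩⟩
      have : (1 : ℤ).toNat ≤ ⌈x⌉.toNat := by omega
      omega
  have hcard : beattyCount α β N = ⌈y⌉.toNat - ⌈x⌉.toNat := by
    unfold beattyCount
    rw [Nat.card_congr (Equiv.subtypeEquivRight key)]
    have : Nat.card (Set.Ico ⌈x⌉.toNat ⌈y⌉.toNat) = ⌈y⌉.toNat - ⌈x⌉.toNat := by simp
    exact this
  rw [hcard]
  have h1 : (1 : ℤ) ≤ ⌈x⌉ := hN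
  omega

/-- Density of {Nγ - k : N ≥ N₂, k ∈ ℤ} for irrational γ. -/
private lemma dense_multiples {γ : ℝ} (hγ : Irrational γ) (N₂ : ℤ) {u v : ℝ} (huv : u < v) :
    ∃ N : ℤ, N₂ ≤ N ∧ ∃ k : ℤ, (N : ℝ) * γ - k ∈ Set.Ioo u v := by
  -- the subgroup of ℤ-combinations of γ and 1
  set G : AddSubgroup ℝ :=
    { carrier := {w | ∃ a b : ℤ, w = a * γ + b}
      zero_mem' := ⟨0, 0, by push_cast; ring⟩
      add_mem' := by
        rintro w₁ w₂ ⟨a₁, b₁, rfl⟩ ⟨a₂, b₂, rfl⟩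
        exact ⟨a₁ + a₂, b₁ + b₂, by push_cast; ring⟩
      neg_mem' := by
        rintro w ⟨a, b, rfl⟩
        exact ⟨-a, -b, by push_cast; ring⟩ } with hG
  have hdense : Dense (G : Set ℝ) := by
    rcases AddSubgroup.dense_or_cyclic G with h | ⟨g, hg⟩
    · exact h
    · exfalso
      have h1 : (1 : ℝ) ∈ G := ⟨0, 1, by push_cast; ring⟩
      have h2 : γ ∈ G := ⟨1, 0, by push_cast; ring⟩
      rw [hg, AddSubgroup.mem_closure_singleton] at h1 h2
      obtain ⟨n, hn⟩ := h1
      obtain ⟨p, hp⟩ := h2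
      have hn0 : n ≠ 0 := by rintro rfl; simp at hn
      have hg0 : g = 1 / (n : ℝ) := by
        field_simp
        rw [← hn]
        push_cast [zsmul_eq_mul]
        ring
      refine hγ ⟨(p : ℚ) / (n : ℚ), ?_⟩
      rw [← hp, hg0]
      push_cast [zsmul_eq_mul]
      field_simp
  -- find a small nonzero element of G
  set ε : ℝ := min (v - u) 1 with hε
  have hε0 : 0 < ε := by simp [hε]; linarith
  obtain ⟨g, hgG, hg⟩ : ∃ g ∈ (G : Set ℝ), g ∈ Set.Ioo 0 ε :=
    hdense.exists_mem_open isOpen_Ioo ⟨ε / 2, by constructor <;> [linarith; linarith]⟩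
  obtain ⟨a, b, rfl⟩ := hgG
  have hane : a ≠ 0 := by
    rintro rfl
    obtain ⟨hg1, hg2⟩ := hg
    have hb1 : (0 : ℝ) < b := by simpa using hg1
    have hb2 : (b : ℝ) < 1 := by
      simpa using lt_of_lt_of_le hg2 (min_le_right (v - u) 1)
    have hb1' : 0 < b := by exact_mod_cast hb1
    have hb2' : b < 1 := by exact_mod_cast hb2
    omega
  set m₀ : ℤ := max N₂ 1 with hm₀
  obtain ⟨hgpos, hgε⟩ := hg
  rcases hane.lt_or_gt with haneg | hapos
  -- case a < 0 : use h' = -g with positive coefficient -a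
  · set h' : ℝ := -((a : ℝ) * γ + b) with hh'
    have hh'neg : h' < 0 := by rw [hh']; linarith
    have hh'ε : -ε < h' := by rw [hh']; linarith
    set K : ℤ := ⌈(m₀ : ℝ) * h' - v⌉ - 1 with hK
    have hK1 : v + (K : ℝ) < (m₀ : ℝ) * h' := by
      have := Int.ceil_lt_add_one ((m₀ : ℝ) * h' - v)
      push_cast [hK]
      push_cast at this
      linarith
    set m' : ℤ := ⌊(v + K) / h'⌋ + 1 with hm'
    have hml : (v + (K : ℝ)) / h' < (m' : ℝ) := by
      push_cast [hm']
      exact Int.lt_floor_add_one _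
    have hmu : (m' : ℝ) - 1 ≤ (v + (K : ℝ)) / h' := by
      push_cast [hm']
      have := Int.floor_le ((v + (K : ℝ)) / h')
      linarith
    have hup : (m' : ℝ) * h' < v + K := by
      rw [div_lt_iff_of_neg hh'neg] at hml
      linarith
    have hlo : v + (K : ℝ) + h' ≤ (m' : ℝ) * h' := by
      rw [le_div_iff_of_neg hh'neg] at hmu
      nlinarith
    have hm'm₀ : m₀ < m' := by
      have : (m' : ℝ) * h' < (m₀ : ℝ) * h' := lt_trans hup hK1
      have := (mul_lt_mul_right_of_neg hh'neg).mp this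
      exact_mod_cast this
    have hm'1 : 1 ≤ m' := by omega
    refine ⟨m' * (-a), ?_, K - m' * (-b), ?_⟩
    · have : m' ≤ m' * (-a) := le_mul_of_one_le_right (by omega) (by omega)
      omega
    · have hexp : ((m' * (-a) : ℤ) : ℝ) * γ - ((K - m' * (-b) : ℤ) : ℝ)
          = (m' : ℝ) * h' - K := by push_cast; rw [hh']; ring
      rw [hexp]
      constructor
      · have hmin : ε ≤ v - u := min_le_left _ _
        linarith
      · linarith
  -- case a > 0
  · set h' : ℝ := (a : ℝ) * γ + b with hh'
    have hh'pos : 0 < h' := hgpos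
    have hh'ε : h' < ε := hgε
    set K : ℤ := ⌊(m₀ : ℝ) * h' - u⌋ + 1 with hK
    have hK1 : (m₀ : ℝ) * h' < u + K := by
      have := Int.lt_floor_add_one ((m₀ : ℝ) * h' - u)
      push_cast [hK]
      linarith
    set m' : ℤ := ⌊(u + K) / h'⌋ + 1 with hm'
    have hml : (u + (K : ℝ)) / h' < (m' : ℝ) := by
      push_cast [hm']
      exact Int.lt_floor_add_one _
    have hmu : (m' : ℝ) - 1 ≤ (u + (K : ℝ)) / h' := by
      push_cast [hm']
      have := Int.floor_le ((u + (K : ℝ)) / h')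
      linarith
    have hlo : u + (K : ℝ) < (m' : ℝ) * h' := by
      rw [div_lt_iff₀ hh'pos] at hml
      linarith
    have hup : (m' : ℝ) * h' ≤ u + K + h' := by
      rw [le_div_iff₀ hh'pos] at hmu
      nlinarith
    have hm'm₀ : m₀ < m' := by
      have : (m₀ : ℝ) * h' < (m' : ℝ) * h' := lt_of_lt_of_le hK1 (le_of_lt hlo)
      have := (mul_lt_mul_iff_of_pos_right hh'pos).mp this
      exact_mod_cast this
    have hm'1 : 1 ≤ m' := by omega
    refine ⟨m' * a, ?_, K - m' * b, ?_⟩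
    · have : m' ≤ m' * a := le_mul_of_one_le_right (by omega) (by omega)
      omega
    · have hexp : ((m' * a : ℤ) : ℝ) * γ - ((K - m' * b : ℤ) : ℝ)
          = (m' : ℝ) * h' - K := by push_cast; rw [hh']; ring
      rw [hexp]
      constructor
      · linarith
      · have : ε ≤ v - u := min_le_left _ _
        linarith

theorem inhomogeneous_pair_mEEC_iff (m : ℕ) (hm : 0 < m) (α₁ α₂ β₁ β₂ : ℝ)
    (h1 : 0 < α₁) (h2 : 0 < α₂) (hi1 : Irrational α₁) (hi2 : Irrational α₂)
    (hsum : 1 / α₁ + 1 / α₂ = (m : ℝ)) :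
    (∃ N₀ : ℤ, ∀ N : ℤ, N ≥ N₀ → beattyCount α₁ β₁ N + beattyCount α₂ β₂ N = m) ↔
      ∃ z : ℤ, β₁ / α₁ + β₂ / α₂ = (z : ℝ) := by
  set s : ℝ := β₁ / α₁ + β₂ / α₂ with hs
  have hα1 : α₁ ≠ 0 := ne_of_gt h1
  have hα2 : α₂ ≠ 0 := ne_of_gt h2
  have hx2 : ∀ N : ℤ, ((N : ℝ) - β₂) / α₂ = ((m : ℝ) * N - s) - ((N : ℝ) - β₁) / α₁ := by
    intro N
    rw [hs, ← hsum]
    field_simp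
    ring
  set F : ℤ → ℤ := fun N => ⌈((N : ℝ) - β₁) / α₁⌉ + ⌈((N : ℝ) - β₂) / α₂⌉ with hF
  set N₁ : ℤ := ⌊max β₁ β₂⌋ + 1 with hN₁
  have hthresh : ∀ N : ℤ, N₁ ≤ N →
      1 ≤ ⌈((N : ℝ) - β₁) / α₁⌉ ∧ 1 ≤ ⌈((N : ℝ) - β₂) / α₂⌉ := by
    intro N hN
    have hNr : max β₁ β₂ < (N : ℝ) := by
      have h0 := Int.lt_floor_add_one (max β₁ β₂)
      have h3 : ((N₁ : ℤ) : ℝ) ≤ (N : ℝ) := by exact_mod_cast hN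
      push_cast [hN₁] at h3
      linarith
    constructor
    · exact Int.ceil_pos.mpr (div_pos (by have := le_max_left β₁ β₂; linarith) h1)
    · exact Int.ceil_pos.mpr (div_pos (by have := le_max_right β₁ β₂; linarith) h2)
  have hcnt : ∀ N : ℤ, N₁ ≤ N →
      ((beattyCount α₁ β₁ N + beattyCount α₂ β₂ N : ℕ) : ℤ) = F (N + 1) - F N := by
    intro N hN
    obtain ⟨ht1, ht2⟩ := hthresh N hN
    have e1 := beattyCount_eq α₁ β₁ h1 N ht1
    have e2 := beattyCount_eq α₂ β₂ h2 N ht2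
    have hcast : (((N : ℤ) + 1 : ℤ) : ℝ) = (N : ℝ) + 1 := by push_cast; ring
    simp only [hF, hcast]
    push_cast
    linarith [e1, e2]
  constructor
  · -- forward direction
    rintro ⟨N₀, hN₀⟩
    by_contra hns
    push_neg at hns
    have hfs : Int.fract s ≠ 0 := my_fract_ne_zero hns
    have hfs0 : 0 < Int.fract s := lt_of_le_of_ne (Int.fract_nonneg s) (Ne.symm hfs)
    have hfs1 : Int.fract s < 1 := Int.fract_lt_one s
    set N₂ : ℤ := max N₀ N₁ with hN₂
    have hFd : ∀ N : ℤ, N₂ ≤ N → F (N + 1) - F N = m := by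
      intro N hN
      have h := hN₀ N (le_trans (le_max_left _ _) hN)
      have h' := hcnt N (le_trans (le_max_right _ _) hN)
      rw [h] at h'
      omega
    set c : ℤ := F N₂ - m * N₂ with hcdef
    have htel : ∀ N : ℤ, N₂ ≤ N → F N - m * N = c := by
      refine Int.le_induction (by rw [hcdef]) ?_
      intro N hN ih
      have h := hFd N hN
      have hr : (m : ℤ) * (N + 1) = m * N + m := by ring
      linarith [h, ih, hr]
    have hkey : ∀ N : ℤ, N₂ ≤ N →
        ⌈((N : ℝ) - β₁) / α₁⌉ - ⌊((N : ℝ) - β₁) / α₁ + s⌋ = c := by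
      intro N hN
      have hFN := htel N hN
      have hexp : F N = ⌈((N : ℝ) - β₁) / α₁⌉ + ((m : ℤ) * N - ⌊((N : ℝ) - β₁) / α₁ + s⌋) := by
        rw [hF]
        have h4 : ((N : ℝ) - β₂) / α₂
            = -(((N : ℝ) - β₁) / α₁ + s) + (((m : ℤ) * N : ℤ) : ℝ) := by
          rw [hx2 N]; push_cast; ring
        simp only [h4, Int.ceil_add_intCast, Int.ceil_neg]
        ring
      omega
    -- density of fractional parts
    have hγ : Irrational (1 / α₁) := by rw [one_div]; exact hi1.inv
    have hx1id : ∀ N : ℤ, ((N : ℝ) - β₁) / α₁ = (N : ℝ) * (1 / α₁) - β₁ / α₁ := by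
      intro N; ring
    have hsplit : (⌊s⌋ : ℝ) + Int.fract s = s := Int.floor_add_fract s
    -- Case A : fract (x₁ N) ∈ (0, 1 - fract s)
    obtain ⟨N, hNge, k, hio⟩ := dense_multiples hγ N₂
      (show β₁ / α₁ + 0 < β₁ / α₁ + (1 - Int.fract s) by linarith)
    obtain ⟨hio1, hio2⟩ := hio
    set x : ℝ := ((N : ℝ) - β₁) / α₁ with hxd
    have hw1 : 0 < x - k := by rw [hxd, hx1id]; linarith
    have hw2 : x - k < 1 - Int.fract s := by rw [hxd, hx1id]; linarith
    have hfloor : ⌊x⌋ = k := Int.floor_eq_iff.mpr ⟨by linarith, by linarith⟩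
    have hfr : Int.fract x = x - k := by
      rw [← Int.self_sub_floor, hfloor]
    have hceil : ⌈x⌉ = k + 1 := by
      rw [my_ceil_eq_floor_add_one (by rw [hfr]; linarith), hfloor]
    have hfsx : ⌊x + s⌋ = k + ⌊s⌋ := by
      apply Int.floor_eq_iff.mpr
      constructor
      · push_cast
        have := Int.floor_le s
        linarith
      · push_cast
        linarith
    have hcA : c = 1 - ⌊s⌋ := by
      have := hkey N hNge
      rw [← hxd, hceil, hfsx] at this
      omega
    -- Case B : fract (x₁ N') ∈ (1 - fract s, 1)
    obtain ⟨N', hNge', k', hio'⟩ := dense_multiples hγ N₂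
      (show β₁ / α₁ + (1 - Int.fract s) < β₁ / α₁ + 1 by linarith)
    obtain ⟨hio1', hio2'⟩ := hio'
    set x' : ℝ := ((N' : ℝ) - β₁) / α₁ with hxd'
    have hw1' : 1 - Int.fract s < x' - k' := by rw [hxd', hx1id]; linarith
    have hw2' : x' - k' < 1 := by rw [hxd', hx1id]; linarith
    have hfloor' : ⌊x'⌋ = k' := Int.floor_eq_iff.mpr ⟨by linarith, by linarith⟩
    have hfr' : Int.fract x' = x' - k' := by
      rw [← Int.self_sub_floor, hfloor']
    have hceil' : ⌈x'⌉ = k' + 1 := by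
      rw [my_ceil_eq_floor_add_one (by rw [hfr']; linarith), hfloor']
    have hfsx' : ⌊x' + s⌋ = k' + ⌊s⌋ + 1 := by
      apply Int.floor_eq_iff.mpr
      constructor
      · push_cast
        linarith
      · push_cast
        have := Int.floor_le s
        linarith
    have hcB : c = -⌊s⌋ := by
      have := hkey N' hNge'
      rw [← hxd', hceil', hfsx'] at this
      omega
    omega
  · -- backward direction
    rintro ⟨z, hz⟩
    have hbad : ∃ N₀' : ℤ, ∀ N : ℤ, N₀' ≤ N → ∀ k : ℤ, ((N : ℝ) - β₁) / α₁ ≠ k := by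
      by_cases hb : ∃ Nb kb : ℤ, ((Nb : ℝ) - β₁) / α₁ = kb
      · obtain ⟨Nb, kb, hNb⟩ := hb
        refine ⟨Nb + 1, fun N hN k hk => ?_⟩
        have hk' : (N : ℝ) - β₁ = k * α₁ := by
          field_simp at hk; linarith
        have hNb' : (Nb : ℝ) - β₁ = kb * α₁ := by
          field_simp at hNb; linarith
        have hkne : k ≠ kb := by
          rintro rfl
          have hNN : (N : ℝ) = Nb := by linarith
          have : N = Nb := by exact_mod_cast hNN
          omega
        apply hi1
        refine ⟨((N - Nb : ℤ) : ℚ) / ((k - kb : ℤ) : ℚ), ?_⟩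
        have hkkb : ((k : ℝ) - kb) ≠ 0 := by
          intro h0
          exact hkne (by exact_mod_cast (by linarith : (k : ℝ) = kb))
        push_cast
        rw [div_eq_iff hkkb]
        linarith
      · push_neg at hb
        exact ⟨0, fun N _ k => hb N k⟩
    obtain ⟨N₀', hgood⟩ := hbad
    refine ⟨max N₁ N₀', fun N hN => ?_⟩
    have hN1 : N₁ ≤ N := le_trans (le_max_left _ _) hN
    have hN0 : N₀' ≤ N := le_trans (le_max_right _ _) hN
    have hFval : ∀ M : ℤ, N₀' ≤ M → F M = m * M - z + 1 := by
      intro M hM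
      have h4 : ((M : ℝ) - β₂) / α₂
          = (((m : ℤ) * M - z : ℤ) : ℝ) - ((M : ℝ) - β₁) / α₁ := by
        rw [hx2 M, hz]; push_cast; ring
      rw [hF]
      simp only [h4]
      rw [my_ceil_add_ceil _ _ (my_fract_ne_zero (hgood M hM))]
    have hc := hcnt N hN1
    rw [hFval N hN0, hFval (N + 1) (by omega)] at hc
    have hfin : ((beattyCount α₁ β₁ N + beattyCount α₂ β₂ N : ℕ) : ℤ) = m := by
      rw [hc]; ring
    exact_mod_cast hfin
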